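/- Let G = ⟨S | R⟩ be a group presentation with all relators of even length. The following are equivalent: (1) for every geodesic word of the form ws with s ∈ S ∪ S⁻¹, the word wss is geodesic; (2) for all g ∈ G, if s ∈ R(g) then s⁻¹ ∉ R(g); (3) for every geodesic word w and every s ∈ S ∪ S⁻¹, there exists e ∈ {1, −1} such that ws^e is geodesic. -/

import Mathlib

section GeneralPresentation

variable {S : Type*}

/-- The element of the presented group represented by a letter `(s, e)`:
`s` if `e = true`, `s⁻¹` if `e = false`. -/
def evalLetter (rels : Set (FreeGroup S)) (t : S × Bool) : PresentedGroup rels :=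
  if t.2 then PresentedGroup.of t.1 else (PresentedGroup.of t.1)⁻¹

/-- The element of the presented group represented by a word in `S ∪ S⁻¹`. -/
def evalW (rels : Set (FreeGroup S)) (w : List (S × Bool)) : PresentedGroup rels :=
  (w.map (evalLetter rels)).prod

/-- The word length (distance to the identity in the word metric) of an element
of the presented group with respect to the generating set `S`. -/
noncomputable def wlen (rels : Set (FreeGroup S)) (g : PresentedGroup rels) : ℕ :=
  sInf {m | ∃ w : List (S × Bool), evalW rels w = g ∧ w.length = m}

/-- A word is geodesic if its length equals the word length of the element it represents. -/
def IsGeodesic (rels : Set (FreeGroup S)) (w : List (S × Bool)) : Prop :=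
  w.length = wlen rels (evalW rels w)

/-- `Rset rels g` is the set of letters `t ∈ S ∪ S⁻¹` such that some geodesic word
ending in `t` represents `g`. -/
def Rset (rels : Set (FreeGroup S)) (g : PresentedGroup rels) : Set (S × Bool) :=
  {t | ∃ v : List (S × Bool), IsGeodesic rels (v ++ [t]) ∧ evalW rels (v ++ [t]) = g}

/-- The inverse of a letter. -/
def invLetter (t : S × Bool) : S × Bool := (t.1, !t.2)

/-- All relators of the presentation have even length. -/
def EvenRels [DecidableEq S] (rels : Set (FreeGroup S)) : Prop :=
  ∀ r ∈ rels, Even (FreeGroup.toWord r).length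

end GeneralPresentation

section Aux

variable {S : Type*} {rels : Set (FreeGroup S)}

lemma evalW_append (w v : List (S × Bool)) :
    evalW rels (w ++ v) = evalW rels w * evalW rels v := by
  simp [evalW]

lemma evalW_singleton (t : S × Bool) : evalW rels [t] = evalLetter rels t := by
  simp [evalW]

lemma evalLetter_invLetter (t : S × Bool) :
    evalLetter rels (invLetter t) = (evalLetter rels t)⁻¹ := by
  cases t with
  | mk s b => cases b <;> simp [evalLetter, invLetter]

lemma exists_word (g : PresentedGroup rels) : ∃ w : List (S × Bool), evalW rels w = g := by
  have hsurj : Function.Surjective (QuotientGroup.mk' (Subgroup.normalClosure rels)) :=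
    QuotientGroup.mk'_surjective _
  obtain ⟨x, hx⟩ := hsurj g
  induction x using FreeGroup.induction_on generalizing g with
  | C1 => exact ⟨[], by simp [evalW, ← hx]; rfl⟩
  | of s => exact ⟨[(s, true)], by simp [evalW, evalLetter, ← hx]; rfl⟩
  | inv_of s _ =>
    refine ⟨[(s, false)], ?_⟩
    have : evalW rels [(s, false)] = (PresentedGroup.of s)⁻¹ := by
      simp [evalW, evalLetter]
    rw [this, ← hx]
    rfl
  | mul x y ihx ihy =>
    obtain ⟨wx, hwx⟩ := ihx (QuotientGroup.mk' _ x) rfl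
    obtain ⟨wy, hwy⟩ := ihy (QuotientGroup.mk' _ y) rfl
    exact ⟨wx ++ wy, by rw [evalW_append, hwx, hwy, ← hx]; simp; rfl⟩

lemma wlen_le {g : PresentedGroup rels} {w : List (S × Bool)} (h : evalW rels w = g) :
    wlen rels g ≤ w.length :=
  Nat.sInf_le ⟨w, h, rfl⟩

lemma exists_geodesic (g : PresentedGroup rels) :
    ∃ w : List (S × Bool), evalW rels w = g ∧ w.length = wlen rels g := by
  have hne : {m | ∃ w : List (S × Bool), evalW rels w = g ∧ w.length = m}.Nonempty := by
    obtain ⟨w, hw⟩ := exists_word g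
    exact ⟨w.length, w, hw, rfl⟩
  exact Nat.sInf_mem hne

lemma parity_kills [DecidableEq S] {rels : Set (FreeGroup S)} (heven : EvenRels rels) :
    ∀ r ∈ rels, FreeGroup.lift (fun _ : S => Multiplicative.ofAdd (1 : ZMod 2)) r = 1 := by
  intro r hr
  have key : ∀ L : List (S × Bool),
      FreeGroup.lift (fun _ : S => Multiplicative.ofAdd (1 : ZMod 2)) (FreeGroup.mk L) =
        Multiplicative.ofAdd (L.length : ZMod 2) := by
    intro L
    rw [FreeGroup.lift_mk]
    induction L with
    | nil => simp
    | cons a L ih =>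
      rw [List.map_cons, List.prod_cons, ih]
      have : (cond a.2 (Multiplicative.ofAdd (1 : ZMod 2))
          (Multiplicative.ofAdd (1 : ZMod 2))⁻¹) = Multiplicative.ofAdd (1 : ZMod 2) := by
        cases a.2 <;> decide
      rw [this, List.length_cons, ← ofAdd_add]
      congr 1
      push_cast
      ring
  have := key r.toWord
  rw [FreeGroup.mk_toWord] at this
  rw [this]
  obtain ⟨k, hk⟩ := heven r hr
  rw [hk]
  have : ((k + k : ℕ) : ZMod 2) = 0 := by
    have h2 : ((2 : ℕ) : ZMod 2) = 0 := ZMod.natCast_self 2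
    push_cast at h2 ⊢
    linear_combination (k : ZMod 2) * h2
  rw [this]; rfl

/-- the parity homomorphism -/
noncomputable def parityHom [DecidableEq S] (rels : Set (FreeGroup S)) (heven : EvenRels rels) :
    PresentedGroup rels →* Multiplicative (ZMod 2) :=
  PresentedGroup.toGroup (parity_kills heven)

lemma parityHom_of [DecidableEq S] {rels : Set (FreeGroup S)} (heven : EvenRels rels) (s : S) :
    parityHom rels heven (PresentedGroup.of s) = Multiplicative.ofAdd (1 : ZMod 2) :=
  PresentedGroup.toGroup.of _

lemma parityHom_evalW [DecidableEq S] (heven : EvenRels rels) (w : List (S × Bool)) :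
    parityHom rels heven (evalW rels w) = Multiplicative.ofAdd (w.length : ZMod 2) := by
  induction w with
  | nil => simp [evalW]
  | cons a w ih =>
    have : evalW rels (a :: w) = evalLetter rels a * evalW rels w := by
      simp [evalW]
    rw [this, map_mul, ih]
    have ha : parityHom rels heven (evalLetter rels a) = Multiplicative.ofAdd (1 : ZMod 2) := by
      cases a with
      | mk s b =>
        cases b
        · have : evalLetter rels (s, false) = (PresentedGroup.of s)⁻¹ := rfl
          rw [this, map_inv, parityHom_of]
          decide
        · have : evalLetter rels (s, true) = PresentedGroup.of s := rfl
          rw [this, parityHom_of]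
    rw [ha, ← ofAdd_add, List.length_cons]
    congr 1
    push_cast
    ring

lemma length_parity [DecidableEq S] (heven : EvenRels rels) {w v : List (S × Bool)}
    (h : evalW rels w = evalW rels v) : (w.length : ZMod 2) = (v.length : ZMod 2) := by
  have h1 := parityHom_evalW heven (rels := rels) w
  have h2 := parityHom_evalW heven (rels := rels) v
  rw [h, h2] at h1
  exact Multiplicative.ofAdd.injective h1.symm

lemma wlen_mul_le (g : PresentedGroup rels) (t : S × Bool) :
    wlen rels (g * evalLetter rels t) ≤ wlen rels g + 1 := by
  obtain ⟨u, hu, hul⟩ := exists_geodesic g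
  have : evalW rels (u ++ [t]) = g * evalLetter rels t := by
    rw [evalW_append, evalW_singleton, hu]
  calc wlen rels (g * evalLetter rels t) ≤ (u ++ [t]).length := wlen_le this
    _ = wlen rels g + 1 := by simp [hul]

lemma wlen_ne [DecidableEq S] (heven : EvenRels rels) (g : PresentedGroup rels) (t : S × Bool) :
    wlen rels (g * evalLetter rels t) ≠ wlen rels g := by
  obtain ⟨u, hu, hul⟩ := exists_geodesic g
  obtain ⟨v, hv, hvl⟩ := exists_geodesic (g * evalLetter rels t)
  have he : evalW rels (u ++ [t]) = evalW rels v := by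
    rw [evalW_append, evalW_singleton, hu, hv]
  have hpar := length_parity heven he
  intro hcontra
  rw [List.length_append, List.length_singleton, hul, hvl, hcontra] at hpar
  have : (1 : ZMod 2) = 0 := by
    have := hpar
    push_cast at this
    linear_combination this
  exact one_ne_zero this

lemma wlen_mul_letter [DecidableEq S] (heven : EvenRels rels) (g : PresentedGroup rels)
    (t : S × Bool) :
    wlen rels (g * evalLetter rels t) = wlen rels g + 1 ∨
      wlen rels (g * evalLetter rels t) + 1 = wlen rels g := by
  have h1 := wlen_mul_le g t
  have h2 := wlen_mul_le (g * evalLetter rels t) (invLetter t)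
  rw [evalLetter_invLetter, mul_inv_cancel_right] at h2
  have h3 := wlen_ne heven g t
  omega

end Aux

/-- equivalence of the three conditions of Lemma `eq`. -/
theorem stallings_conditions_equiv {S : Type*} [DecidableEq S] (rels : Set (FreeGroup S))
    (heven : EvenRels rels) :
    ((∀ (w : List (S × Bool)) (t : S × Bool),
        IsGeodesic rels (w ++ [t]) → IsGeodesic rels (w ++ [t, t])) ↔
      (∀ (g : PresentedGroup rels) (t : S × Bool),
        t ∈ Rset rels g → invLetter t ∉ Rset rels g)) ∧
    ((∀ (g : PresentedGroup rels) (t : S × Bool),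
        t ∈ Rset rels g → invLetter t ∉ Rset rels g) ↔
      (∀ (w : List (S × Bool)) (t : S × Bool), IsGeodesic rels w →
        IsGeodesic rels (w ++ [t]) ∨ IsGeodesic rels (w ++ [invLetter t]))) := by
  constructor
  · constructor
    · -- (1) → (2)
      intro h1 g t ht htinv
      obtain ⟨v, hvgeo, hvg⟩ := ht
      obtain ⟨u, hugeo, hug⟩ := htinv
      have hgeo2 := h1 u (invLetter t) hugeo
      have heval2 : evalW rels (u ++ [invLetter t, invLetter t]) = evalW rels v := by
        have : (u ++ [invLetter t, invLetter t]) =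
            (u ++ [invLetter t]) ++ [invLetter t] := by simp
        rw [this, evalW_append, evalW_singleton, hug, evalLetter_invLetter]
        have hv' : evalW rels v * evalLetter rels t = g := by
          rw [← evalW_singleton (rels := rels) t, ← evalW_append, hvg]
        group
        rw [← hv']
        group
      have hlen2 : (u ++ [invLetter t, invLetter t]).length =
          wlen rels (evalW rels v) := by rw [hgeo2, heval2]
      have hle : wlen rels (evalW rels v) ≤ v.length := wlen_le rfl
      have hu_len : (u ++ [invLetter t]).length = wlen rels g := by
        rw [hugeo, hug]
      have hv_len : (v ++ [t]).length = wlen rels g := by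
        rw [hvgeo, hvg]
      simp only [List.length_append, List.length_singleton, List.length_cons,
        List.length_nil] at hlen2 hu_len hv_len
      omega
    · -- (2) → (1)
      intro h2 w t hg
      set g := evalW rels (w ++ [t]) with hgdef
      have hgw : evalW rels w * evalLetter rels t = g := by
        rw [hgdef, evalW_append, evalW_singleton]
      have hwt2 : evalW rels (w ++ [t, t]) = g * evalLetter rels t := by
        have : (w ++ [t, t]) = (w ++ [t]) ++ [t] := by simp
        rw [this, evalW_append, evalW_singleton, ← hgdef]
      have hglen : (w ++ [t]).length = wlen rels g := hg
      rcases wlen_mul_letter heven g t with hcase | hcase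
      · show (w ++ [t, t]).length = wlen rels (evalW rels (w ++ [t, t]))
        rw [hwt2, hcase, ← hglen]
        simp
      · -- contradiction case
        exfalso
        obtain ⟨u, hu, hul⟩ := exists_geodesic (g * evalLetter rels t)
        have huinv : evalW rels (u ++ [invLetter t]) = g := by
          rw [evalW_append, evalW_singleton, hu, evalLetter_invLetter,
            mul_inv_cancel_right]
        have hulen : (u ++ [invLetter t]).length = wlen rels g := by
          simp only [List.length_append, List.length_singleton]
          omega
        have htinv : invLetter t ∈ Rset rels g := by
          refine ⟨u, ?_, huinv⟩
          show (u ++ [invLetter t]).length = wlen rels (evalW rels (u ++ [invLetter t]))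
          rw [huinv, ← hulen]
        have htmem : t ∈ Rset rels g := ⟨w, hg, rfl⟩
        exact h2 g t htmem htinv
  · constructor
    · -- (2) → (3)
      intro h2 w t hw
      set g := evalW rels w with hgdef
      have hwlen : w.length = wlen rels g := hw
      have hevalt : evalW rels (w ++ [t]) = g * evalLetter rels t := by
        rw [evalW_append, evalW_singleton, ← hgdef]
      have hevalti : evalW rels (w ++ [invLetter t]) = g * evalLetter rels (invLetter t) := by
        rw [evalW_append, evalW_singleton, ← hgdef]
      rcases wlen_mul_letter heven g t with hc1 | hc1
      · left
        show (w ++ [t]).length = wlen rels (evalW rels (w ++ [t]))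
        rw [hevalt, hc1]
        simp [hwlen]
      · rcases wlen_mul_letter heven g (invLetter t) with hc2 | hc2
        · right
          show (w ++ [invLetter t]).length = wlen rels (evalW rels (w ++ [invLetter t]))
          rw [hevalti, hc2]
          simp [hwlen]
        · -- both decrease: contradiction with (2)
          exfalso
          obtain ⟨u, hu, hul⟩ := exists_geodesic (g * evalLetter rels t)
          obtain ⟨v, hv, hvl⟩ := exists_geodesic (g * evalLetter rels (invLetter t))
          have huinv : evalW rels (u ++ [invLetter t]) = g := by
            rw [evalW_append, evalW_singleton, hu, evalLetter_invLetter,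
              mul_inv_cancel_right]
          have hvt : evalW rels (v ++ [t]) = g := by
            rw [evalW_append, evalW_singleton, hv, evalLetter_invLetter, inv_mul_cancel_right]
          have h1 : invLetter t ∈ Rset rels g := by
            refine ⟨u, ?_, huinv⟩
            show (u ++ [invLetter t]).length = wlen rels (evalW rels (u ++ [invLetter t]))
            rw [huinv, ← hwlen]
            simp only [List.length_append, List.length_singleton]
            omega
          have h1' : t ∈ Rset rels g := by
            refine ⟨v, ?_, hvt⟩
            show (v ++ [t]).length = wlen rels (evalW rels (v ++ [t]))
            rw [hvt, ← hwlen]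
            simp only [List.length_append, List.length_singleton]
            omega
          exact h2 g t h1' h1
    · -- (3) → (2)
      intro h3 g t ht htinv
      obtain ⟨v, hvgeo, hvg⟩ := ht
      obtain ⟨u, hugeo, hug⟩ := htinv
      have hvlen : (v ++ [t]).length = wlen rels g := by rw [hvgeo, hvg]
      have hulen : (u ++ [invLetter t]).length = wlen rels g := by rw [hugeo, hug]
      have hevalu : evalW rels u = g * evalLetter rels t := by
        have : evalW rels u * evalLetter rels (invLetter t) = g := by
          rw [← evalW_singleton (rels := rels) (invLetter t), ← evalW_append, hug]
        rw [evalLetter_invLetter] at this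
        rw [← this]
        group
      have hevalv : evalW rels v = g * evalLetter rels (invLetter t) := by
        have : evalW rels v * evalLetter rels t = g := by
          rw [← evalW_singleton (rels := rels) t, ← evalW_append, hvg]
        rw [evalLetter_invLetter, ← this]
        group
      rcases h3 (u ++ [invLetter t]) t hugeo with hc | hc
      · -- (u ++ [invLetter t]) ++ [t] geodesic, represents g * e t
        have heval : evalW rels ((u ++ [invLetter t]) ++ [t]) = g * evalLetter rels t := by
          rw [evalW_append, evalW_singleton, hug]
        have hge : ((u ++ [invLetter t]) ++ [t]).length =
            wlen rels (g * evalLetter rels t) := by rw [hc, heval]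
        have hle : wlen rels (g * evalLetter rels t) ≤ u.length := wlen_le hevalu
        simp only [List.length_append, List.length_singleton] at hge hulen hvlen
        omega
      · have heval : evalW rels ((u ++ [invLetter t]) ++ [invLetter t]) =
            g * evalLetter rels (invLetter t) := by
          rw [evalW_append, evalW_singleton, hug]
        have hge : ((u ++ [invLetter t]) ++ [invLetter t]).length =
            wlen rels (g * evalLetter rels (invLetter t)) := by rw [hc, heval]
        have hle : wlen rels (g * evalLetter rels (invLetter t)) ≤ v.length := wlen_le hevalv
        simp only [List.length_append, List.length_singleton] at hge hvlen hulen
        omega
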